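/- arXiv:2212.08692 — 8 statements merged into one kernel-verified Lean document; each statement's English description precedes it below -/
import Mathlib

section
/- Let M ≥ 2 be an integer and, for each m = 1, …, M−1, let c_m : (0,∞) → [0,∞) be a function. For every ε > 0 and every integer m₀ with 1 ≤ m₀ ≤ M−1 there exists a constant C ≥ 0, depending only on ε, M, m₀ and the functions c_1, …, c_{M−1}, with the following property: whenever a_0, a_1, …, a_M are nonnegative real numbers such that for every ε' > 0 and every m with 1 ≤ m ≤ M−1 one has a_m ≤ ε'·a_{m+1} + c_m(ε')·a_{m−1}, then a_{m₀} ≤ ε·a_M + C·a_0. -/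
/-- Local convexity implies global convexity (Lemma 3.1). -/
theorem local_convexity_implies_global_convexity
    (M : ℕ) (hM : 2 ≤ M) (c : ℕ → ℝ → ℝ)
    (hc : ∀ m : ℕ, 1 ≤ m → m ≤ M - 1 → ∀ ε' : ℝ, 0 < ε' → 0 ≤ c m ε')
    (ε : ℝ) (hε : 0 < ε) (m₀ : ℕ) (hm₀ : 1 ≤ m₀) (hm₀' : m₀ ≤ M - 1) :
    ∃ C : ℝ, 0 ≤ C ∧
      ∀ a : ℕ → ℝ, (∀ m : ℕ, m ≤ M → 0 ≤ a m) →
        (∀ ε' : ℝ, 0 < ε' → ∀ m : ℕ, 1 ≤ m → m ≤ M - 1 →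
          a m ≤ ε' * a (m + 1) + c m ε' * a (m - 1)) →
        a m₀ ≤ ε * a M + C * a 0 := by
  -- Step lemma: a m ≤ e * a (m+1) + C * a 0
  have A : ∀ m : ℕ, 1 ≤ m → m + 1 ≤ M → ∀ e : ℝ, 0 < e →
      ∃ C : ℝ, 0 ≤ C ∧
        ∀ a : ℕ → ℝ, (∀ m : ℕ, m ≤ M → 0 ≤ a m) →
          (∀ ε' : ℝ, 0 < ε' → ∀ m : ℕ, 1 ≤ m → m ≤ M - 1 →
            a m ≤ ε' * a (m + 1) + c m ε' * a (m - 1)) →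
          a m ≤ e * a (m + 1) + C * a 0 := by
    intro m hm
    induction m, hm using Nat.le_induction with
    | base =>
      intro _ e he
      refine ⟨c 1 e, hc 1 le_rfl (by omega) e he, fun a ha hrec => ?_⟩
      simpa using hrec e he 1 le_rfl (by omega)
    | succ m hm ih =>
      intro hle e he
      set K : ℝ := c (m + 1) (e / 2) with hKdef
      have hK : 0 ≤ K := hc (m + 1) (by omega) (by omega) (e / 2) (by linarith)
      have hδ : (0:ℝ) < 1 / (2 * (K + 1)) := by positivity
      obtain ⟨C', hC', hstep⟩ := ih (by omega) (1 / (2 * (K + 1))) hδ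
      refine ⟨2 * K * C', by positivity, fun a ha hrec => ?_⟩
      have h1 := hrec (e / 2) (by linarith) (m + 1) (by omega) (by omega)
      simp only [Nat.add_sub_cancel] at h1
      have h2 := hstep a ha hrec
      have ham1 : 0 ≤ a (m + 1) := ha (m + 1) (by omega)
      have ha0 : 0 ≤ a 0 := ha 0 (by omega)
      have hKd : K * (1 / (2 * (K + 1))) ≤ 1 / 2 := by
        rw [mul_one_div, div_le_div_iff₀ (by positivity) (by norm_num)]
        linarith
      have h3 : K * a m ≤ K * (1 / (2 * (K + 1)) * a (m + 1) + C' * a 0) :=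
        mul_le_mul_of_nonneg_left h2 hK
      have h4 : K * (1 / (2 * (K + 1))) * a (m + 1) ≤ (1 / 2) * a (m + 1) :=
        mul_le_mul_of_nonneg_right hKd ham1
      nlinarith [h1, h3, h4]
  -- Chain lemma
  have B : ∀ k m : ℕ, 1 ≤ m → m + 1 + k = M → ∀ e : ℝ, 0 < e →
      ∃ C : ℝ, 0 ≤ C ∧
        ∀ a : ℕ → ℝ, (∀ m : ℕ, m ≤ M → 0 ≤ a m) →
          (∀ ε' : ℝ, 0 < ε' → ∀ m : ℕ, 1 ≤ m → m ≤ M - 1 →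
            a m ≤ ε' * a (m + 1) + c m ε' * a (m - 1)) →
          a m ≤ e * a M + C * a 0 := by
    intro k
    induction k with
    | zero =>
      intro m hm hmM e he
      obtain ⟨C, hC, hP⟩ := A m hm (by omega) e he
      refine ⟨C, hC, fun a ha hrec => ?_⟩
      have := hP a ha hrec
      have hmeq : m + 1 = M := by omega
      rwa [hmeq] at this
    | succ k ih =>
      intro m hm hmM e he
      obtain ⟨C₁, hC₁, hP₁⟩ := A m hm (by omega) 1 one_pos
      obtain ⟨C₂, hC₂, hP₂⟩ := ih (m + 1) (by omega) (by omega) e he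
      refine ⟨C₂ + C₁, by positivity, fun a ha hrec => ?_⟩
      have h1 := hP₁ a ha hrec
      have h2 := hP₂ a ha hrec
      linarith
  obtain ⟨C, hC, hP⟩ := B (M - 1 - m₀) m₀ hm₀ (by omega) ε hε
  exact ⟨C, hC, hP⟩
end

section
/- Let M ≥ 2 be an integer and let b_0, b_1, …, b_M be nonnegative real numbers. Then there exist real numbers b̂_0, b̂_1, …, b̂_M such that b̂_m > b_m for every m with 0 ≤ m ≤ M, and b̂_m² ≤ b̂_{m−1}·(b̂_{m+1} − b_{m+1}) for every m with 1 ≤ m ≤ M−1. -/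
/-- Existence of the auxiliary majorizing sequence `b̂` (used in Proposition 3.4). -/
theorem exists_majorizing_sequence
    (M : ℕ) (hM : 2 ≤ M) (b : ℕ → ℝ) (hb : ∀ m : ℕ, m ≤ M → 0 ≤ b m) :
    ∃ bh : ℕ → ℝ,
      (∀ m : ℕ, m ≤ M → b m < bh m) ∧
      (∀ m : ℕ, 1 ≤ m → m ≤ M - 1 →
        (bh m) ^ 2 ≤ bh (m - 1) * (bh (m + 1) - b (m + 1))) := by
  set bh : ℕ → ℝ := fun n => Nat.rec (b 0 + 1) (fun k ih => ih ^ 2 + b (k + 1) + 1) n with hbh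
  have h0 : bh 0 = b 0 + 1 := rfl
  have hsucc : ∀ n, bh (n + 1) = bh n ^ 2 + b (n + 1) + 1 := fun n => rfl
  have hge1 : ∀ n, n ≤ M → 1 ≤ bh n := by
    intro n hn
    induction n with
    | zero => rw [h0]; linarith [hb 0 (Nat.zero_le M)]
    | succ k ih =>
      rw [hsucc]
      have := hb (k + 1) hn
      nlinarith [sq_nonneg (bh k)]
  refine ⟨bh, ?_, ?_⟩
  · intro m hm
    cases m with
    | zero => rw [h0]; linarith
    | succ k => rw [hsucc]; nlinarith [sq_nonneg (bh k)]
  · intro m hm1 hm2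
    obtain ⟨k, rfl⟩ := Nat.exists_eq_add_of_le hm1
    have hk : k ≤ M := by omega
    have h1 : 1 ≤ bh (1 + k - 1) := hge1 _ (by omega)
    have : bh (1 + k + 1) - b (1 + k + 1) = bh (1 + k) ^ 2 + 1 := by
      rw [hsucc]; ring
    rw [this]
    nlinarith [sq_nonneg (bh (1 + k))]
end

section
/- For all integers j and ν with 0 ≤ j ≤ ν − 1 one has ∏_{i=j}^{ν−1} ε_i = (τ_j/(1 + τ_{ν−1}))·(2/q)^{ν−j−1}. -/
/-- Product formula for the quotients ε_i = τ_i/(1+τ_i). -/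
theorem moser_epsilon_product
    (q τ₀ : ℝ) (hq1 : 1 < q) (hq2 : q < 2) (hτ₀ : 0 < τ₀)
    (τ β ε : ℕ → ℝ)
    (hτzero : τ 0 = τ₀) (hβzero : β 0 = 0)
    (hτ : ∀ ν : ℕ, 1 ≤ ν →
      τ ν = (2 / q) ^ ν * τ₀ + ((2 / q) ^ (ν + 1) - 2 / q) / (2 / q - 1))
    (hβ : ∀ ν : ℕ, 1 ≤ ν →
      β ν = ((2 / q) ^ (ν + 1) - 2 / q) / (2 / q - 1))
    (hε : ∀ ν : ℕ, ε ν = τ ν / (1 + τ ν)) :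
    ∀ j ν : ℕ, j + 1 ≤ ν →
      (∏ i ∈ Finset.Ico j ν, ε i) = τ j / (1 + τ (ν - 1)) * (2 / q) ^ (ν - j - 1) := by
  have hq0 : (0:ℝ) < q := lt_trans one_pos hq1
  have hr1 : (1:ℝ) < 2 / q := (one_lt_div hq0).2 hq2
  have hrne : 2 / q - 1 ≠ 0 := by linarith
  have hqne : q ≠ 0 := ne_of_gt hq0
  -- key recursion
  have hrec : ∀ ν : ℕ, τ (ν + 1) = 2 / q * (1 + τ ν) := by
    intro ν
    set r : ℝ := 2 / q with hrdef
    rcases Nat.eq_zero_or_pos ν with h0 | hpos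
    · subst h0
      rw [hτ 1 le_rfl, hτzero]
      field_simp
      ring
    · rw [hτ (ν + 1) (by omega), hτ ν hpos]
      field_simp
      ring
  have hpos : ∀ ν : ℕ, 0 < τ ν := by
    intro ν
    induction ν with
    | zero => rw [hτzero]; exact hτ₀
    | succ n ih =>
        rw [hrec n]
        have : 0 < 1 + τ n := by linarith
        positivity
  intro j ν hjν
  induction ν, hjν using Nat.le_induction with
  | base =>
      rw [Nat.Ico_succ_singleton, Finset.prod_singleton, hε j]
      simp
  | succ n hn ih =>
      rw [Finset.prod_Ico_succ_top (by omega : j ≤ n), ih, hε n]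
      have h1 : (0:ℝ) < 1 + τ (n - 1) := by have := hpos (n - 1); linarith
      have h2 : (0:ℝ) < 1 + τ n := by have := hpos n; linarith
      have hτn : τ n = 2 / q * (1 + τ (n - 1)) := by
        have := hrec (n - 1)
        rwa [Nat.sub_add_cancel (by omega : 1 ≤ n)] at this
      have hexp : n + 1 - j - 1 = (n - j - 1) + 1 := by omega
      rw [Nat.add_sub_cancel, hexp, pow_succ, hτn]
      field_simp
end

section
/- As ν → ∞, the products ∏_{i=0}^{ν−1} ε_i converge to (2 − q)·τ₀/((2 − q)·τ₀ + 2). -/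
open Filter

/-- Convergence of the products of the ε_i. -/
theorem moser_epsilon_product_limit
    (q τ₀ : ℝ) (hq1 : 1 < q) (hq2 : q < 2) (hτ₀ : 0 < τ₀)
    (τ β ε : ℕ → ℝ)
    (hτzero : τ 0 = τ₀) (hβzero : β 0 = 0)
    (hτ : ∀ ν : ℕ, 1 ≤ ν →
      τ ν = (2 / q) ^ ν * τ₀ + ((2 / q) ^ (ν + 1) - 2 / q) / (2 / q - 1))
    (hβ : ∀ ν : ℕ, 1 ≤ ν →
      β ν = ((2 / q) ^ (ν + 1) - 2 / q) / (2 / q - 1))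
    (hε : ∀ ν : ℕ, ε ν = τ ν / (1 + τ ν)) :
    Tendsto (fun ν : ℕ => ∏ i ∈ Finset.range ν, ε i) atTop
      (nhds ((2 - q) * τ₀ / ((2 - q) * τ₀ + 2))) := by
  have hq0 : 0 < q := lt_trans one_pos hq1
  have hs0 : 0 < q / 2 := by positivity
  have hs1 : q / 2 < 1 := by linarith
  have h2q : 0 < 2 - q := by linarith
  have hDpos : ∀ ν : ℕ, 0 < (2 - q) * τ₀ + 2 * (1 - (q/2)^ν) := by
    intro ν
    have : (q/2)^ν ≤ 1 := pow_le_one₀ hs0.le hs1.le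
    nlinarith
  have key : ∀ ν : ℕ, ∏ i ∈ Finset.range ν, ε i
      = (2 - q) * τ₀ / ((2 - q) * τ₀ + 2 * (1 - (q/2)^ν)) := by
    intro ν
    induction ν with
    | zero =>
      simp only [Finset.range_zero, Finset.prod_empty, pow_zero, sub_self, mul_zero, add_zero]
      rw [div_self]
      positivity
    | succ n ih =>
      rw [Finset.prod_range_succ, ih, hε n]
      rcases Nat.eq_zero_or_pos n with hn | hn
      · subst hn
        rw [hτzero]
        have h1 : (0:ℝ) < 1 + τ₀ := by linarith
        rw [pow_zero, pow_one]
        field_simp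
        ring
      · have hτn := hτ n hn
        have hinv : (2:ℝ)/q = (q/2)⁻¹ := (inv_div q 2).symm
        have hDn := hDpos n
        have hDn1 := hDpos (n+1)
        rw [pow_succ] at hDn1
        rw [hτn, hinv, inv_pow, inv_pow, pow_succ]
        obtain ⟨a, ha_def⟩ : ∃ a : ℝ, a = (q/2)^n := ⟨_, rfl⟩
        rw [← ha_def] at hDn hDn1 ⊢
        have ha : (0:ℝ) < a := ha_def ▸ pow_pos hs0 n
        have ha1 : a ≤ 1 := ha_def ▸ pow_le_one₀ hs0.le hs1.le
        have haq : a * (q/2) ≤ q/2 := by nlinarith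
        have h3 : (1:ℝ) < (q/2)⁻¹ := (one_lt_inv₀ hs0).mpr hs1
        have hT : (0:ℝ) < a⁻¹ * τ₀ + ((a * (q/2))⁻¹ - (q/2)⁻¹) / ((q/2)⁻¹ - 1) := by
          have h1 : (0:ℝ) < a⁻¹ * τ₀ := by positivity
          have h2 : (q/2)⁻¹ ≤ (a * (q/2))⁻¹ :=
            inv_anti₀ (by positivity) haq
          have h4 : (0:ℝ) ≤ ((a * (q/2))⁻¹ - (q/2)⁻¹) / ((q/2)⁻¹ - 1) :=
            div_nonneg (by linarith) (by linarith)
          linarith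
        have h1T : (0:ℝ) < 1 + (a⁻¹ * τ₀ + ((a * (q/2))⁻¹ - (q/2)⁻¹) / ((q/2)⁻¹ - 1)) := by
          linarith
        rw [div_mul_div_comm, div_eq_div_iff (by positivity) (ne_of_gt hDn1)]
        field_simp
        ring
  simp only [key]
  have hpow : Tendsto (fun ν : ℕ => (q/2)^ν) atTop (nhds 0) :=
    tendsto_pow_atTop_nhds_zero_of_lt_one hs0.le hs1
  have hden : Tendsto (fun ν : ℕ => (2 - q) * τ₀ + 2 * (1 - (q/2)^ν)) atTop
      (nhds ((2 - q) * τ₀ + 2)) := by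
    have : Tendsto (fun ν : ℕ => (2 - q) * τ₀ + 2 * (1 - (q/2)^ν)) atTop
        (nhds ((2 - q) * τ₀ + 2 * (1 - 0))) :=
      tendsto_const_nhds.add ((tendsto_const_nhds.sub hpow).const_mul 2)
    simpa using this
  exact tendsto_const_nhds.div hden (by positivity)
end

section
/- As ν → ∞, the sums Σ_{j=0}^{ν−1} (1/τ_j)·∏_{i=j}^{ν−1} ε_i converge to 2/((2 − q)·τ₀ + 2). -/
open Filter

/-- Convergence of the weighted sums Σ_j (1/τ_j)·∏_{i=j}^{ν−1} ε_i. -/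
theorem moser_weighted_sum_limit
    (q τ₀ : ℝ) (hq1 : 1 < q) (hq2 : q < 2) (hτ₀ : 0 < τ₀)
    (τ β ε : ℕ → ℝ)
    (hτzero : τ 0 = τ₀) (hβzero : β 0 = 0)
    (hτ : ∀ ν : ℕ, 1 ≤ ν →
      τ ν = (2 / q) ^ ν * τ₀ + ((2 / q) ^ (ν + 1) - 2 / q) / (2 / q - 1))
    (hβ : ∀ ν : ℕ, 1 ≤ ν →
      β ν = ((2 / q) ^ (ν + 1) - 2 / q) / (2 / q - 1))
    (hε : ∀ ν : ℕ, ε ν = τ ν / (1 + τ ν)) :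
    Tendsto
      (fun ν : ℕ => ∑ j ∈ Finset.range ν, (1 / τ j) * ∏ i ∈ Finset.Ico j ν, ε i)
      atTop (nhds (2 / ((2 - q) * τ₀ + 2))) := by
  have hq0 : (0:ℝ) < q := by linarith
  set r : ℝ := 2 / q with hr_def
  have hr1 : 1 < r := (one_lt_div hq0).mpr (by linarith)
  have hr0 : (0:ℝ) < r := by linarith
  have hrne : r - 1 ≠ 0 := by linarith
  have hτall : ∀ ν : ℕ, τ ν = r ^ ν * τ₀ + (r ^ (ν + 1) - r) / (r - 1) := by
    intro ν
    rcases Nat.eq_zero_or_pos ν with h | h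
    · subst h; simp [hτzero]
    · exact hτ ν h
  have hτpos : ∀ ν, 0 < τ ν := by
    intro ν
    rw [hτall]
    have h1 : 0 < r ^ ν * τ₀ := mul_pos (pow_pos hr0 ν) hτ₀
    have h2 : r ≤ r ^ (ν + 1) := by
      calc r = r ^ 1 := (pow_one r).symm
        _ ≤ r ^ (ν + 1) := pow_le_pow_right₀ (le_of_lt hr1) (by omega)
    have h3 : 0 ≤ (r ^ (ν + 1) - r) / (r - 1) :=
      div_nonneg (by linarith) (by linarith)
    linarith
  have hτne : ∀ ν, τ ν ≠ 0 := fun ν => (hτpos ν).ne'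
  have hstep : ∀ ν, τ (ν + 1) = r * (1 + τ ν) := by
    intro ν
    rw [hτall, hτall]
    field_simp
    ring
  have hprod : ∀ ν, ∀ j ≤ ν,
      (∏ i ∈ Finset.Ico j ν, ε i) = r ^ (ν - j) * τ j / τ ν := by
    intro ν
    induction ν with
    | zero =>
      intro j hj
      interval_cases j
      simp [hτne 0]
    | succ n ih =>
      intro j hj
      rcases eq_or_lt_of_le hj with h | h
      · subst h; simp [hτne]
      · have hjn : j ≤ n := Nat.lt_succ_iff.mp h
        rw [Finset.prod_Ico_succ_top hjn, ih j hjn, hε]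
        have h1 : (0:ℝ) < 1 + τ n := by have := hτpos n; linarith
        have h2 : τ (n + 1) = r * (1 + τ n) := hstep n
        have h3 : n + 1 - j = (n - j) + 1 := by omega
        rw [h3, h2]
        field_simp [hτne n, ne_of_gt h1]
        ring
  have hsum : ∀ ν, (∑ j ∈ Finset.range ν, (1 / τ j) * ∏ i ∈ Finset.Ico j ν, ε i)
      = (r ^ (ν + 1) - r) / ((r - 1) * τ ν) := by
    intro ν
    have h1 : ∀ j ∈ Finset.range ν,
        (1 / τ j) * ∏ i ∈ Finset.Ico j ν, ε i = r ^ (ν - j) / τ ν := by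
      intro j hj
      rw [hprod ν j (le_of_lt (Finset.mem_range.mp hj))]
      field_simp [hτne j, hτne ν]
    rw [Finset.sum_congr rfl h1, ← Finset.sum_div]
    have h2 : (∑ j ∈ Finset.range ν, r ^ (ν - j)) = (r ^ (ν + 1) - r) / (r - 1) := by
      have h3 := Finset.sum_range_reflect (fun j => r ^ (ν - j)) ν
      have h4 : (∑ j ∈ Finset.range ν, r ^ (ν - (ν - 1 - j)))
          = ∑ j ∈ Finset.range ν, r ^ (j + 1) := by
        apply Finset.sum_congr rfl
        intro j hj
        have : ν - (ν - 1 - j) = j + 1 := by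
          have := Finset.mem_range.mp hj; omega
        rw [this]
      rw [← h3, h4]
      have h5 : (∑ j ∈ Finset.range ν, r ^ (j + 1)) = r * ∑ j ∈ Finset.range ν, r ^ j := by
        rw [Finset.mul_sum]
        apply Finset.sum_congr rfl
        intro j _; ring
      rw [h5, geom_sum_eq (by linarith : r ≠ 1)]
      field_simp
      ring
    rw [h2]
    rw [div_div]
  have key : ∀ ν, (r ^ (ν + 1) - r) / ((r - 1) * τ ν)
      = (r - r * (1 / r) ^ ν) / ((r - 1) * τ₀ + (r - r * (1 / r) ^ ν)) := by
    intro ν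
    have hpν : (0:ℝ) < r ^ ν := pow_pos hr0 ν
    have hinv : ((1:ℝ) / r) ^ ν = (r ^ ν)⁻¹ := by rw [one_div, inv_pow]
    have hle : (r ^ ν)⁻¹ ≤ 1 := by
      rw [inv_le_one_iff₀]; right; exact one_le_pow₀ (le_of_lt hr1)
    have hden : 0 < (r - 1) * τ₀ + (r - r * (r ^ ν)⁻¹) := by
      have : r * (r ^ ν)⁻¹ ≤ r * 1 := by
        apply mul_le_mul_of_nonneg_left hle (le_of_lt hr0)
      nlinarith [mul_pos (sub_pos.mpr hr1) hτ₀]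
    have hA : (r - 1) * τ ν ≠ 0 := mul_ne_zero hrne (hτne ν)
    rw [hinv, div_eq_div_iff hA hden.ne']
    rw [hτall]
    field_simp
    ring
  have hx : Tendsto (fun ν : ℕ => (1 / r) ^ ν) atTop (nhds 0) :=
    tendsto_pow_atTop_nhds_zero_of_lt_one (by positivity)
      (by rw [div_lt_one hr0]; linarith)
  have hnum : Tendsto (fun ν : ℕ => r - r * (1 / r) ^ ν) atTop (nhds r) := by
    have h := (hx.const_mul r).const_sub r
    simpa using h
  have hden2 : Tendsto (fun ν : ℕ => (r - 1) * τ₀ + (r - r * (1 / r) ^ ν)) atTop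
      (nhds ((r - 1) * τ₀ + r)) := tendsto_const_nhds.add hnum
  have hDpos : 0 < (r - 1) * τ₀ + r := by nlinarith [mul_pos (sub_pos.mpr hr1) hτ₀]
  have hfin := hnum.div hden2 hDpos.ne'
  have hd2 : ((2 - q) * τ₀ + 2 : ℝ) ≠ 0 := by nlinarith
  have hLeq : r / ((r - 1) * τ₀ + r) = 2 / ((2 - q) * τ₀ + 2) := by
    rw [div_eq_div_iff hDpos.ne' hd2, hr_def]
    field_simp
  have hmain : Tendsto
      (fun ν : ℕ => ∑ j ∈ Finset.range ν, (1 / τ j) * ∏ i ∈ Finset.Ico j ν, ε i)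
      atTop (nhds (r / ((r - 1) * τ₀ + r))) := by
    apply hfin.congr
    intro ν
    exact ((hsum ν).trans (key ν)).symm
  rwa [hLeq] at hmain
end

section
/- As ν → ∞, the sums Σ_{j=0}^{ν−1} (j/τ_j)·∏_{i=j}^{ν−1} ε_i converge to 2q/((2 − q)²·τ₀ + 2(2 − q)); in particular, the limit is at most 4/((2 − q)²·τ₀ + 2(2 − q)). -/
open Filter

/-- Convergence of the weighted sums Σ_j (j/τ_j)·∏_{i=j}^{ν−1} ε_i, and a bound on the limit. -/
theorem moser_weighted_sum_limit'
    (q τ₀ : ℝ) (hq1 : 1 < q) (hq2 : q < 2) (hτ₀ : 0 < τ₀)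
    (τ β ε : ℕ → ℝ)
    (hτzero : τ 0 = τ₀) (hβzero : β 0 = 0)
    (hτ : ∀ ν : ℕ, 1 ≤ ν →
      τ ν = (2 / q) ^ ν * τ₀ + ((2 / q) ^ (ν + 1) - 2 / q) / (2 / q - 1))
    (hβ : ∀ ν : ℕ, 1 ≤ ν →
      β ν = ((2 / q) ^ (ν + 1) - 2 / q) / (2 / q - 1))
    (hε : ∀ ν : ℕ, ε ν = τ ν / (1 + τ ν)) :
    Tendsto
      (fun ν : ℕ => ∑ j ∈ Finset.range ν, ((j : ℝ) / τ j) * ∏ i ∈ Finset.Ico j ν, ε i)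
      atTop (nhds (2 * q / ((2 - q) ^ 2 * τ₀ + 2 * (2 - q)))) ∧
    2 * q / ((2 - q) ^ 2 * τ₀ + 2 * (2 - q)) ≤ 4 / ((2 - q) ^ 2 * τ₀ + 2 * (2 - q)) := by
  have hq0 : (0:ℝ) < q := by linarith
  set r : ℝ := 2 / q with hr_def
  have hr1 : 1 < r := by rw [hr_def, lt_div_iff₀ hq0]; linarith
  have hr0 : 0 < r := by linarith
  have hrne : r ≠ 0 := ne_of_gt hr0
  have hr1ne : r - 1 ≠ 0 := by linarith
  -- recurrence
  have hrec : ∀ ν : ℕ, τ (ν + 1) = r * (1 + τ ν) := by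
    intro ν
    rcases Nat.eq_zero_or_pos ν with h | h
    · subst h
      rw [hτ 1 le_rfl, hτzero]
      field_simp
      ring
    · rw [hτ (ν + 1) (by omega), hτ ν h]
      field_simp
      ring
  have hpos : ∀ ν, 0 < τ ν := by
    intro ν
    induction ν with
    | zero => rw [hτzero]; exact hτ₀
    | succ n ih => rw [hrec n]; nlinarith
  have hτne : ∀ ν, τ ν ≠ 0 := fun ν => ne_of_gt (hpos ν)
  have hεr : ∀ ν : ℕ, ε ν = r * τ ν / τ (ν + 1) := by
    intro ν
    have h1τ : (1 : ℝ) + τ ν ≠ 0 := by have := hpos ν; linarith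
    rw [hε ν, hrec ν]
    field_simp
  -- product formula
  have hprod : ∀ j ν : ℕ, j ≤ ν →
      ∏ i ∈ Finset.Ico j ν, ε i = r ^ (ν - j) * τ j / τ ν := by
    intro j ν hjν
    induction ν, hjν using Nat.le_induction with
    | base => simp [hτne j]
    | succ n hn ih =>
      rw [Finset.prod_Ico_succ_top hn, ih, hεr n, Nat.succ_sub hn, pow_succ]
      rw [div_mul_div_comm, div_eq_div_iff (mul_ne_zero (hτne n) (hτne (n + 1))) (hτne (n + 1))]
      ring
  -- sum identity
  have hsum : ∀ ν : ℕ,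
      ∑ j ∈ Finset.range ν, ((j : ℝ) / τ j) * ∏ i ∈ Finset.Ico j ν, ε i
        = (∑ j ∈ Finset.range ν, (j : ℝ) * (q / 2) ^ j) * (r ^ ν / τ ν) := by
    intro ν
    rw [Finset.sum_mul]
    refine Finset.sum_congr rfl fun j hj => ?_
    have hjν : j ≤ ν := le_of_lt (Finset.mem_range.mp hj)
    have e1 : ((j : ℝ) / τ j) * (r ^ (ν - j) * τ j / τ ν) = (j : ℝ) * r ^ (ν - j) / τ ν := by
      rw [div_mul_div_comm, div_eq_div_iff (mul_ne_zero (hτne j) (hτne ν)) (hτne ν)]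
      ring
    rw [hprod j ν hjν, e1, pow_sub₀ r hrne hjν]
    have hx : (q / 2 : ℝ) ^ j = (r ^ j)⁻¹ := by
      rw [hr_def, div_pow, div_pow, inv_div]
    rw [hx]
    have hrj : r ^ j ≠ 0 := pow_ne_zero _ hrne
    field_simp
  have hxlt : |(q / 2 : ℝ)| < 1 := by rw [abs_of_pos (by linarith)]; linarith
  -- limit of the geometric-type sum
  have h1 : Tendsto (fun ν : ℕ => ∑ j ∈ Finset.range ν, (j : ℝ) * (q / 2) ^ j)
      atTop (nhds ((q / 2) / (1 - q / 2) ^ 2)) := by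
    have := hasSum_coe_mul_geometric_of_norm_lt_one (r := (q / 2 : ℝ)) (by rwa [Real.norm_eq_abs])
    exact this.tendsto_sum_nat
  -- limit of r^ν / τ ν
  set L : ℝ := τ₀ + r / (r - 1) with hL_def
  have hLpos : 0 < L := by
    have : 0 < r / (r - 1) := div_pos hr0 (by linarith)
    rw [hL_def]; linarith
  have h2 : Tendsto (fun ν : ℕ => r ^ ν / τ ν) atTop (nhds (L⁻¹)) := by
    have hg : Tendsto (fun ν : ℕ => τ₀ + (r - r * (q / 2) ^ ν) / (r - 1)) atTop (nhds L) := by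
      have hp : Tendsto (fun ν : ℕ => (q / 2 : ℝ) ^ ν) atTop (nhds 0) :=
        tendsto_pow_atTop_nhds_zero_of_norm_lt_one (by rwa [Real.norm_eq_abs])
      have : Tendsto (fun ν : ℕ => τ₀ + (r - r * (q / 2) ^ ν) / (r - 1)) atTop
          (nhds (τ₀ + (r - r * 0) / (r - 1))) := by
        exact tendsto_const_nhds.add (((tendsto_const_nhds.sub
          (tendsto_const_nhds.mul hp))).div_const _)
      simpa [hL_def] using this
    have hfg : Tendsto (fun ν : ℕ => τ ν / r ^ ν) atTop (nhds L) := by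
      refine hg.congr' ?_
      filter_upwards [eventually_ge_atTop 1] with ν hν
      have hrν : r ^ ν ≠ 0 := pow_ne_zero _ hrne
      have hx : (q / 2 : ℝ) ^ ν = (r ^ ν)⁻¹ := by
        rw [hr_def, div_pow, div_pow, inv_div]
      rw [hτ ν hν, hx]
      field_simp
      ring
    have := hfg.inv₀ (ne_of_gt hLpos)
    exact this.congr fun ν => inv_div _ _
  have hmain := h1.mul h2
  have hval : (q / 2) / (1 - q / 2) ^ 2 * (L⁻¹)
      = 2 * q / ((2 - q) ^ 2 * τ₀ + 2 * (2 - q)) := by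
    have h2q : (2 - q : ℝ) ≠ 0 := by linarith
    have hLne : L ≠ 0 := ne_of_gt hLpos
    have hden : (2 - q) ^ 2 * τ₀ + 2 * (2 - q) ≠ 0 := by nlinarith
    have hqne : q ≠ 0 := ne_of_gt hq0
    have hrr : r / (r - 1) = 2 / (2 - q) := by
      rw [hr_def, div_eq_div_iff hr1ne h2q]
      field_simp
      rw [hr_def]
      field_simp
    have hL2 : τ₀ + 2 / (2 - q) ≠ 0 := by rw [← hrr, ← hL_def]; exact hLne
    rw [hL_def, hrr]
    have hA : ((1 - q / 2) ^ 2 * (τ₀ + 2 / (2 - q)) : ℝ) ≠ 0 :=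
      mul_ne_zero (pow_ne_zero _ (by linarith)) hL2
    rw [← div_eq_mul_inv, div_div, div_eq_div_iff hA hden]
    field_simp
  constructor
  · have : Tendsto
        (fun ν : ℕ => ∑ j ∈ Finset.range ν, ((j : ℝ) / τ j) * ∏ i ∈ Finset.Ico j ν, ε i)
        atTop (nhds ((q / 2) / (1 - q / 2) ^ 2 * (L⁻¹))) := by
      refine hmain.congr fun ν => (hsum ν).symm
    rwa [hval] at this
  · have hden : 0 < (2 - q) ^ 2 * τ₀ + 2 * (2 - q) := by nlinarith
    rw [div_le_div_iff₀ hden hden]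
    nlinarith
end

section
/- Let A ≥ 0 be a real number and let (a_ν)_{ν≥0} be a sequence of nonnegative real numbers satisfying a_{ν+1}^{1+τ_ν} ≤ A·(1 + τ_ν)·a_ν^{τ_ν} for every ν ≥ 0. Then limsup_{ν→∞} a_ν ≤ (A·c_*)^α · (2/q)^{4/((2−q)²·τ₀ + 2(2−q))} · a_0^{1−α}, where c_* = τ₀ + 2/(2 − q) and α = 2/((2 − q)·τ₀ + 2). -/
open Filter

set_option maxHeartbeats 1000000 in
/-- The abstract Moser-type iteration at the core of Lemma 3.6. -/
theorem moser_iteration_limsup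
    (q τ₀ : ℝ) (hq1 : 1 < q) (hq2 : q < 2) (hτ₀ : 0 < τ₀)
    (τ β ε : ℕ → ℝ)
    (hτzero : τ 0 = τ₀) (hβzero : β 0 = 0)
    (hτ : ∀ ν : ℕ, 1 ≤ ν →
      τ ν = (2 / q) ^ ν * τ₀ + ((2 / q) ^ (ν + 1) - 2 / q) / (2 / q - 1))
    (hβ : ∀ ν : ℕ, 1 ≤ ν →
      β ν = ((2 / q) ^ (ν + 1) - 2 / q) / (2 / q - 1))
    (hε : ∀ ν : ℕ, ε ν = τ ν / (1 + τ ν))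
    (A : ℝ) (hA : 0 ≤ A) (a : ℕ → ℝ) (ha : ∀ ν : ℕ, 0 ≤ a ν)
    (hrec : ∀ ν : ℕ, a (ν + 1) ^ (1 + τ ν) ≤ A * (1 + τ ν) * a ν ^ (τ ν)) :
    limsup a atTop ≤
      (A * (τ₀ + 2 / (2 - q))) ^ (2 / ((2 - q) * τ₀ + 2)) *
        (2 / q) ^ ((4 : ℝ) / ((2 - q) ^ 2 * τ₀ + 2 * (2 - q))) *
        a 0 ^ (1 - 2 / ((2 - q) * τ₀ + 2)) := by
  have hq0 : 0 < q := lt_trans one_pos hq1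
  have h2q : 0 < 2 - q := by linarith
  set r : ℝ := 2 / q with hrdef
  have hr1 : 1 < r := (one_lt_div hq0).2 (by linarith)
  have hr0 : 0 < r := lt_trans one_pos hr1
  have hrm1 : 0 < r - 1 := by linarith
  have hrm1' : r - 1 ≠ 0 := hrm1.ne'
  -- the τ formula for all ν
  have hτall : ∀ ν : ℕ, τ ν = r ^ ν * τ₀ + (r ^ (ν + 1) - r) / (r - 1) := by
    intro ν
    cases ν with
    | zero =>
      rw [hτzero, pow_zero, pow_one, one_mul, sub_self, zero_div, add_zero]
    | succ n => exact hτ (n + 1) (Nat.succ_le_succ (Nat.zero_le n))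
  clear_value r
  clear hτ hβ hε hβzero β ε
  -- positivity of τ
  have hτpos : ∀ ν : ℕ, 0 < τ ν := by
    intro ν
    induction ν with
    | zero => rw [hτzero]; exact hτ₀
    | succ n ihn =>
      have h1 : τ (n + 1) = r * (1 + τ n) := by
        rw [hτall (n + 1), hτall n]
        field_simp
        ring
      rw [h1]
      have : 0 < 1 + τ n := by linarith
      positivity
  set P : ℕ → ℝ := fun ν => 1 + τ ν with hPdef
  have hPpos : ∀ ν : ℕ, 0 < P ν := fun ν => by
    have := hτpos ν; simp only [hPdef]; linarith
  have hτsucc : ∀ ν : ℕ, τ (ν + 1) = r * P ν := by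
    intro ν
    simp only [hPdef]
    rw [hτall (ν + 1), hτall ν]
    field_simp
    ring
  -- the partial geometric sums
  set t : ℕ → ℝ := fun ν => ∑ k ∈ Finset.range (ν + 1), (1 / r) ^ k with htdef
  have hkey : ∀ n : ℕ, r ^ n * (1 / r) ^ n = 1 := by
    intro n
    rw [← mul_pow, mul_one_div_cancel hr0.ne', one_pow]
  have htpos : ∀ ν : ℕ, 0 < t ν := by
    intro ν
    apply Finset.sum_pos
    · intro k _; positivity
    · exact ⟨0, Finset.mem_range.2 (Nat.succ_pos ν)⟩
  have ht0 : t 0 = 1 := by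
    show ∑ k ∈ Finset.range 1, (1 / r) ^ k = 1
    rw [Finset.sum_range_one, pow_zero]
  have htsucc : ∀ n : ℕ, t (n + 1) = t n + (1 / r) ^ (n + 1) := by
    intro n
    show ∑ k ∈ Finset.range (n + 1 + 1), (1 / r) ^ k = _
    rw [Finset.sum_range_succ]
  have hPt : ∀ ν : ℕ, P ν = r ^ ν * (τ₀ + t ν) := by
    intro ν
    induction ν with
    | zero =>
      show 1 + τ 0 = r ^ 0 * (τ₀ + t 0)
      rw [hτzero, ht0, pow_zero, one_mul]
      ring
    | succ n ihn =>
      have h1 : P (n + 1) = r * P n + 1 := by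
        show 1 + τ (n + 1) = r * P n + 1
        rw [hτsucc n]; ring
      rw [h1, ihn, htsucc n]
      linear_combination (-1 : ℝ) * hkey (n + 1)
  -- geometric series facts
  have hrinv0 : (0:ℝ) ≤ 1 / r := by positivity
  have hrinv1 : 1 / r < 1 := by rw [div_lt_one hr0]; exact hr1
  set R : ℝ := r / (r - 1) with hRdef
  set R' : ℝ := r / (r - 1) ^ 2 with hR'def
  have hgeo : HasSum (fun n : ℕ => (1 / r) ^ n) R := by
    have h := hasSum_geometric_of_lt_one hrinv0 hrinv1
    have heq : (1 - 1 / r)⁻¹ = R := by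
      rw [hRdef]; field_simp
    rwa [heq] at h
  have hgeo' : HasSum (fun n : ℕ => (n : ℝ) * (1 / r) ^ n) R' := by
    have h := hasSum_coe_mul_geometric_of_norm_lt_one
      (r := (1:ℝ)/r) (by rw [Real.norm_eq_abs, abs_of_nonneg hrinv0]; exact hrinv1)
    have heq : (1 / r) / (1 - 1 / r) ^ 2 = R' := by
      rw [hR'def]; field_simp
    rwa [heq] at h
  have htleR : ∀ ν : ℕ, t ν ≤ R :=
    fun ν => sum_le_hasSum _ (fun k _ => by positivity) hgeo
  have hRpos : 0 < R := by rw [hRdef]; positivity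
  have hR'pos : 0 < R' := by rw [hR'def]; positivity
  have ht_lim : Tendsto t atTop (nhds R) := by
    have h := hgeo.tendsto_sum_nat
    exact h.comp (tendsto_add_atTop_nat 1)
  -- constants
  set cstar : ℝ := τ₀ + 2 / (2 - q) with hcdef
  have hRval : R = 2 / (2 - q) := by
    rw [hRdef, hrdef]; field_simp
  have hcstar : cstar = τ₀ + R := by rw [hcdef, hRval]
  have hR'val : R' = 2 * q / (2 - q) ^ 2 := by
    rw [hR'def, hrdef]; field_simp
  have hcpos : 0 < cstar := by rw [hcstar]; linarith
  have hPle : ∀ ν : ℕ, P ν ≤ cstar * r ^ ν := by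
    intro ν
    rw [hPt ν, hcstar]
    have h1 : τ₀ + t ν ≤ τ₀ + R := by linarith [htleR ν]
    have h2 : (0:ℝ) ≤ r ^ ν := by positivity
    nlinarith
  clear_value R R' cstar
  -- RHS is nonnegative
  have hRHS0 : 0 ≤ (A * cstar) ^ (2 / ((2 - q) * τ₀ + 2)) *
      r ^ ((4 : ℝ) / ((2 - q) ^ 2 * τ₀ + 2 * (2 - q))) *
      a 0 ^ (1 - 2 / ((2 - q) * τ₀ + 2)) := by
    apply mul_nonneg (mul_nonneg ?_ ?_) ?_
    · exact Real.rpow_nonneg (mul_nonneg hA hcpos.le) _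
    · exact Real.rpow_nonneg hr0.le _
    · exact Real.rpow_nonneg (ha 0) _
  -- degenerate case : some a N = 0
  by_cases hzero : ∃ N, a N = 0
  · obtain ⟨N, hN⟩ := hzero
    have hafter : ∀ m : ℕ, a (N + m) = 0 := by
      intro m
      induction m with
      | zero => exact hN
      | succ k ihk =>
        have h := hrec (N + k)
        rw [ihk, Real.zero_rpow (hτpos (N + k)).ne'] at h
        simp only [mul_zero] at h
        by_contra hne
        have h4 : 0 < a (N + (k + 1)) := (ha _).lt_of_ne (Ne.symm hne)
        have h5 : a (N + k + 1) = a (N + (k + 1)) := by rw [Nat.add_assoc]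
        rw [h5] at h
        exact absurd h (not_le.2 (Real.rpow_pos_of_pos h4 _))
    have hev : ∀ᶠ n in atTop, a n = 0 := by
      filter_upwards [eventually_ge_atTop N] with n hn
      obtain ⟨m, rfl⟩ := Nat.exists_eq_add_of_le hn
      exact hafter m
    have hls : limsup a atTop = 0 := (limsup_congr hev).trans (limsup_const 0)
    rw [hls]; exact hRHS0
  -- main case : all a ν > 0
  push_neg at hzero
  have hapos : ∀ ν : ℕ, 0 < a ν := fun ν => (ha ν).lt_of_ne (Ne.symm (hzero ν))
  have hApos : 0 < A := by
    rcases hA.lt_or_eq with h | h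
    · exact h
    · exfalso
      have h1 := hrec 0
      rw [← h, zero_mul, zero_mul] at h1
      exact absurd h1 (not_le.2 (Real.rpow_pos_of_pos (hapos 1) _))
  set b : ℕ → ℝ := fun ν => Real.log (a ν) with hbdef
  have hlog : ∀ ν : ℕ, P ν * b (ν + 1) ≤ Real.log (A * P ν) + τ ν * b ν := by
    intro ν
    have hP' : (0:ℝ) < 1 + τ ν := hPpos ν
    have h := Real.log_le_log (Real.rpow_pos_of_pos (hapos (ν + 1)) _) (hrec ν)
    rw [Real.log_rpow (hapos (ν + 1)),
      Real.log_mul (ne_of_gt (mul_pos hApos hP'))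
        (Real.rpow_pos_of_pos (hapos ν) _).ne',
      Real.log_rpow (hapos ν)] at h
    simp only [hPdef, hbdef]
    linarith
  set S : ℕ → ℝ := fun ν => ∑ k ∈ Finset.range (ν + 1),
      (1 / r) ^ k * Real.log (A * P k) with hSdef
  have hS0 : S 0 = Real.log (A * P 0) := by
    show ∑ k ∈ Finset.range 1, (1 / r) ^ k * Real.log (A * P k) = _
    rw [Finset.sum_range_one, pow_zero, one_mul]
  have hSsucc : ∀ n : ℕ, S (n + 1) = S n + (1 / r) ^ (n + 1) * Real.log (A * P (n + 1)) := by
    intro n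
    show ∑ k ∈ Finset.range (n + 1 + 1), (1 / r) ^ k * Real.log (A * P k) = _
    rw [Finset.sum_range_succ]
  have hclaim : ∀ ν : ℕ, P ν * b (ν + 1) ≤ r ^ ν * (S ν + τ₀ * b 0) := by
    intro ν
    induction ν with
    | zero =>
      have h := hlog 0
      rw [hτzero] at h
      rw [pow_zero, one_mul, hS0]
      linarith
    | succ n ihn =>
      have h := hlog (n + 1)
      rw [hτsucc n] at h
      have h2 : r * (P n * b (n + 1)) ≤ r * (r ^ n * (S n + τ₀ * b 0)) :=
        mul_le_mul_of_nonneg_left ihn hr0.le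
      have h4 : Real.log (A * P (n + 1)) + r * (r ^ n * (S n + τ₀ * b 0)) =
          r ^ (n + 1) * (S (n + 1) + τ₀ * b 0) := by
        rw [hSsucc n]
        linear_combination (-(Real.log (A * P (n + 1)))) * hkey (n + 1)
      linarith [h, h2, h4]
  -- bound the log factors
  set L1 : ℝ := Real.log (A * cstar) with hL1def
  set L2 : ℝ := Real.log r with hL2def
  have hL2nn : 0 ≤ L2 := Real.log_nonneg hr1.le
  have hlogAP : ∀ k : ℕ, Real.log (A * P k) ≤ L1 + (k : ℝ) * L2 := by
    intro k
    have h1 : A * P k ≤ A * cstar * r ^ k := by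
      have := hPle k
      nlinarith [hPpos k]
    have h2 := Real.log_le_log (mul_pos hApos (hPpos k)) h1
    rwa [Real.log_mul (mul_pos hApos hcpos).ne' (pow_pos hr0 k).ne',
      Real.log_pow] at h2
  clear_value L1 L2
  have hSle : ∀ ν : ℕ, S ν ≤ L1 * t ν + L2 * R' := by
    intro ν
    have h1 : S ν ≤ ∑ k ∈ Finset.range (ν + 1), (1 / r) ^ k * (L1 + (k : ℝ) * L2) := by
      apply Finset.sum_le_sum
      intro k _
      exact mul_le_mul_of_nonneg_left (hlogAP k) (by positivity)
    have h2 : ∑ k ∈ Finset.range (ν + 1), (1 / r) ^ k * (L1 + (k : ℝ) * L2) =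
        L1 * t ν + L2 * ∑ k ∈ Finset.range (ν + 1), (k : ℝ) * (1 / r) ^ k := by
      simp only [htdef, Finset.mul_sum]
      rw [← Finset.sum_add_distrib]
      apply Finset.sum_congr rfl
      intro k _; ring
    have h3 : ∑ k ∈ Finset.range (ν + 1), (k : ℝ) * (1 / r) ^ k ≤ R' :=
      sum_le_hasSum _ (fun k _ => by positivity) hgeo'
    calc S ν ≤ L1 * t ν + L2 * ∑ k ∈ Finset.range (ν + 1), (k : ℝ) * (1 / r) ^ k := by
            rw [← h2]; exact h1
      _ ≤ L1 * t ν + L2 * R' := by nlinarith [hL2nn, h3]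
  -- the per-step bound
  set g : ℕ → ℝ := fun ν => (L1 * t ν + (L2 * R' + τ₀ * b 0)) / (τ₀ + t ν) with hgdef
  have hdenpos : ∀ ν : ℕ, 0 < τ₀ + t ν := fun ν => by linarith [htpos ν]
  have hble : ∀ ν : ℕ, b (ν + 1) ≤ g ν := by
    intro ν
    have h1 := hclaim ν
    rw [hPt ν] at h1
    have hrp : (0:ℝ) < r ^ ν := by positivity
    have hgν : g ν = (L1 * t ν + (L2 * R' + τ₀ * b 0)) / (τ₀ + t ν) := rfl
    rw [hgν, le_div_iff₀ (hdenpos ν)]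
    have h4 : r ^ ν * ((τ₀ + t ν) * b (ν + 1)) ≤ r ^ ν * (L1 * t ν + (L2 * R' + τ₀ * b 0)) := by
      have h2 : r ^ ν * (S ν + τ₀ * b 0) ≤ r ^ ν * (L1 * t ν + (L2 * R' + τ₀ * b 0)) := by
        have := hSle ν
        nlinarith
      calc r ^ ν * ((τ₀ + t ν) * b (ν + 1)) = r ^ ν * (τ₀ + t ν) * b (ν + 1) := by ring
        _ ≤ r ^ ν * (S ν + τ₀ * b 0) := h1
        _ ≤ r ^ ν * (L1 * t ν + (L2 * R' + τ₀ * b 0)) := h2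
    have h5 := (mul_le_mul_iff_right₀ hrp).mp h4
    linarith
  have haexp : ∀ ν : ℕ, a (ν + 1) ≤ Real.exp (g ν) := by
    intro ν
    calc a (ν + 1) = Real.exp (b (ν + 1)) := (Real.exp_log (hapos (ν + 1))).symm
      _ ≤ Real.exp (g ν) := Real.exp_le_exp.2 (hble ν)
  -- limit of g
  set G : ℝ := (L1 * R + (L2 * R' + τ₀ * b 0)) / (τ₀ + R) with hGdef
  have hg_lim : Tendsto g atTop (nhds G) := by
    apply Tendsto.div
    · exact (ht_lim.const_mul L1).add tendsto_const_nhds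
    · exact tendsto_const_nhds.add ht_lim
    · linarith
  -- limsup a ≤ exp G
  have hcobdd : IsCoboundedUnder (· ≤ ·) atTop a :=
    isCoboundedUnder_le_of_le atTop (x := 0) ha
  have hlimsup : limsup a atTop ≤ Real.exp G := by
    apply le_of_forall_pos_le_add
    intro δ hδ
    have hev : ∀ᶠ ν in atTop, Real.exp (g ν) < Real.exp G + δ :=
      (hg_lim.rexp).eventually_lt_const (by linarith)
    obtain ⟨N, hN⟩ := eventually_atTop.mp hev
    apply limsup_le_of_le hcobdd
    rw [eventually_atTop]
    refine ⟨N + 1, fun n hn => ?_⟩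
    obtain ⟨m, rfl⟩ := Nat.exists_eq_add_of_le hn
    rw [Nat.add_right_comm]
    calc a (N + m + 1) ≤ Real.exp (g (N + m)) := haexp (N + m)
      _ ≤ Real.exp G + δ := (hN (N + m) (Nat.le_add_right N m)).le
  -- exp G ≤ RHS
  have hDpos : 0 < (2 - q) * τ₀ + 2 := by nlinarith
  have hD2pos : 0 < (2 - q) ^ 2 * τ₀ + 2 * (2 - q) := by nlinarith
  have hτRpos : 0 < τ₀ + R := by linarith
  have hαeq : R / (τ₀ + R) = 2 / ((2 - q) * τ₀ + 2) := by
    rw [hRval]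
    field_simp
  have hδeq : τ₀ / (τ₀ + R) = 1 - 2 / ((2 - q) * τ₀ + 2) := by
    rw [hRval]
    field_simp
    ring
  have hGsplit : Real.exp G = (A * cstar) ^ (R / (τ₀ + R)) * r ^ (R' / (τ₀ + R)) *
      (a 0) ^ (τ₀ / (τ₀ + R)) := by
    rw [Real.rpow_def_of_pos (mul_pos hApos hcpos), Real.rpow_def_of_pos hr0,
      Real.rpow_def_of_pos (hapos 0), ← Real.exp_add, ← Real.exp_add]
    congr 1
    rw [hGdef, ← hL1def, ← hL2def]
    have hb0 : Real.log (a 0) = b 0 := rfl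
    rw [hb0]
    field_simp
    ring
  have hmid : r ^ (R' / (τ₀ + R)) ≤ r ^ ((4 : ℝ) / ((2 - q) ^ 2 * τ₀ + 2 * (2 - q))) := by
    apply Real.rpow_le_rpow_of_exponent_le hr1.le
    have heq : R' / (τ₀ + R) = 2 * q / ((2 - q) ^ 2 * τ₀ + 2 * (2 - q)) := by
      rw [hR'val, hRval]
      field_simp
    rw [heq, div_le_div_iff₀ hD2pos hD2pos]
    nlinarith
  have hfinal : Real.exp G ≤ (A * cstar) ^ (2 / ((2 - q) * τ₀ + 2)) *
      r ^ ((4 : ℝ) / ((2 - q) ^ 2 * τ₀ + 2 * (2 - q))) *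
      (a 0) ^ (1 - 2 / ((2 - q) * τ₀ + 2)) := by
    rw [hGsplit, hαeq, hδeq]
    apply mul_le_mul_of_nonneg_right _ (Real.rpow_nonneg (ha 0) _)
    exact mul_le_mul_of_nonneg_left hmid (Real.rpow_nonneg (mul_pos hApos hcpos).le _)
  exact hlimsup.trans hfinal
end

section
/- Let (X, μ) be a measure space, let u : X → ℝ be measurable with ‖u‖_{L²(μ)} < ∞, and let c₀ > 0 and B ≥ 0 be real constants. Assume that for every integer τ ≥ 1 one has ‖u‖_{L^{2(1+τ)}(μ)}^{1+τ} ≤ c₀·(1 + τ)·B·‖u‖_{L^{2τ}(μ)}^{τ} (equivalently, ‖|u|^{1+τ}‖_{L²} ≤ c₀(1+τ)B·‖|u|^{τ}‖_{L²}). Then for every real p with 2 < p < ∞ there is a constant c, depending only on c₀ and p (one may take c = max(1, c₀)·(⌈p/2⌉!)^{1/⌈p/2⌉}), such that ‖u‖_{L^p(μ)} ≤ c·‖u‖_{L²(μ)}^{2/p}·B^{1−2/p}. -/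
open MeasureTheory
open scoped ENNReal

/-- Abstract iteration behind Lemma 3.7: an L²-to-Lᵖ bound from the
Michael–Simon-type recursive inequality. -/
theorem lp_bound_of_iteration
    {X : Type*} [MeasurableSpace X] (μ : Measure X)
    (u : X → ℝ) (hu : Measurable u) (h2 : eLpNorm u 2 μ < ⊤)
    (c₀ B : ℝ) (hc₀ : 0 < c₀) (hB : 0 ≤ B)
    (hiter : ∀ τ : ℕ, 1 ≤ τ →
      eLpNorm u (2 * (1 + (τ : ℝ≥0∞))) μ ^ (1 + τ) ≤
        ENNReal.ofReal (c₀ * (1 + (τ : ℝ)) * B) * eLpNorm u (2 * (τ : ℝ≥0∞)) μ ^ τ) :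
    ∀ p : ℝ, 2 < p →
      eLpNorm u (ENNReal.ofReal p) μ ≤
        ENNReal.ofReal (max 1 c₀ *
            ((Nat.ceil (p / 2)).factorial : ℝ) ^ ((1 : ℝ) / (Nat.ceil (p / 2) : ℝ))) *
          eLpNorm u 2 μ ^ ((2 : ℝ) / p) * ENNReal.ofReal B ^ (1 - 2 / p) := by
  intro p hp
  have hp0 : (0 : ℝ) < p := by linarith
  have hpne : p ≠ 0 := hp0.ne'
  set N : ℕ → ℝ≥0∞ := fun m => eLpNorm u (2 * (m : ℝ≥0∞)) μ with hN_def
  -- the iteration bound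
  have hN : ∀ m : ℕ, 1 ≤ m →
      N m ^ m ≤ ENNReal.ofReal (c₀ ^ (m - 1) * (m.factorial : ℝ) * B ^ (m - 1)) * N 1 := by
    intro m hm
    induction m, hm using Nat.le_induction with
    | base => simp
    | succ m hm ih =>
      have h1 : N (m + 1) ^ (m + 1) ≤ ENNReal.ofReal (c₀ * (1 + (m : ℝ)) * B) * N m ^ m := by
        have h := hiter m hm
        have e : (2 : ℝ≥0∞) * (1 + (m : ℝ≥0∞)) = 2 * ((m + 1 : ℕ) : ℝ≥0∞) := by
          push_cast; ring
        rw [e] at h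
        simpa [hN_def, add_comm] using h
      calc N (m + 1) ^ (m + 1)
          ≤ ENNReal.ofReal (c₀ * (1 + (m : ℝ)) * B) * N m ^ m := h1
        _ ≤ ENNReal.ofReal (c₀ * (1 + (m : ℝ)) * B) *
              (ENNReal.ofReal (c₀ ^ (m - 1) * (m.factorial : ℝ) * B ^ (m - 1)) * N 1) :=
            mul_le_mul_right ih _
        _ = ENNReal.ofReal (c₀ ^ (m + 1 - 1) * ((m + 1).factorial : ℝ) * B ^ (m + 1 - 1)) *
              N 1 := by
            rw [← mul_assoc, ← ENNReal.ofReal_mul (by positivity)]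
            congr 2
            obtain ⟨j, rfl⟩ : ∃ j, m = j + 1 := ⟨m - 1, (Nat.succ_pred_eq_of_pos hm).symm⟩
            simp only [Nat.add_sub_cancel, Nat.factorial_succ]
            push_cast
            ring
  set k : ℕ := ⌈p / 2⌉₊ with hk_def
  have hk2 : 2 ≤ k := by
    have : (1 : ℕ) < ⌈p / 2⌉₊ := Nat.lt_ceil.mpr (by push_cast; linarith)
    omega
  set K : ℝ := (k : ℝ) with hK_def
  have hK2 : (2 : ℝ) ≤ K := by rw [hK_def]; exact_mod_cast hk2
  have hKne : K ≠ 0 := by linarith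
  have hK1ne : K - 1 ≠ 0 := by linarith
  have hpK : p ≤ 2 * K := by
    have := Nat.le_ceil (p / 2)
    rw [← hk_def, ← hK_def] at this
    linarith
  set θ : ℝ := (2 * K / p - 1) / (K - 1) with hθ_def
  have hθ0 : 0 ≤ θ := by
    apply div_nonneg _ (by linarith)
    have : (1 : ℝ) ≤ 2 * K / p := (one_le_div hp0).mpr hpK
    linarith
  have hθ1 : θ < 1 := by
    rw [hθ_def, div_lt_one (by linarith)]
    have : 2 * K / p < K := by
      rw [div_lt_iff₀ hp0]
      nlinarith
    linarith
  have hrel : θ + (1 - θ) / K = 2 / p := by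
    rw [hθ_def]
    field_simp
    ring
  have h2p1 : 2 / p < 1 := (div_lt_one hp0).mpr hp
  have h2p0 : 0 < 2 / p := by positivity
  -- norms as integrals
  have hN1 : N 1 = eLpNorm u 2 μ := by simp [hN_def]
  set A2 : ℝ≥0∞ := ∫⁻ x, (‖u x‖₊ : ℝ≥0∞) ^ (2 : ℝ) ∂μ with hA2_def
  set Ak : ℝ≥0∞ := ∫⁻ x, (‖u x‖₊ : ℝ≥0∞) ^ (2 * K) ∂μ with hAk_def
  set Ap : ℝ≥0∞ := ∫⁻ x, (‖u x‖₊ : ℝ≥0∞) ^ p ∂μ with hAp_def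
  have hN1' : N 1 = A2 ^ ((1 : ℝ) / 2) := by
    rw [hN1, eLpNorm_eq_lintegral_rpow_enorm_toReal (by norm_num) (by norm_num)]
    simp only [enorm_eq_nnnorm]
    rw [hA2_def]
    norm_num
  have hkne0 : ((k : ℝ≥0∞)) ≠ 0 := Nat.cast_ne_zero.mpr (by omega)
  have harg0 : (2 : ℝ≥0∞) * (k : ℝ≥0∞) ≠ 0 := mul_ne_zero (by norm_num) hkne0
  have hargtop : (2 : ℝ≥0∞) * (k : ℝ≥0∞) ≠ ⊤ :=
    ENNReal.mul_ne_top (by norm_num) (ENNReal.natCast_ne_top k)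
  have ht : ((2 : ℝ≥0∞) * (k : ℝ≥0∞)).toReal = 2 * K := by
    rw [hK_def]; simp
  have hNk : N k = Ak ^ (1 / (2 * K)) := by
    show eLpNorm u (2 * (k : ℝ≥0∞)) μ = _
    rw [eLpNorm_eq_lintegral_rpow_enorm_toReal harg0 hargtop]
    simp only [enorm_eq_nnnorm]
    rw [hAk_def, ht]
  have hNp : eLpNorm u (ENNReal.ofReal p) μ = Ap ^ (1 / p) := by
    rw [eLpNorm_eq_lintegral_rpow_enorm_toReal (ENNReal.ofReal_pos.mpr hp0).ne' ENNReal.ofReal_ne_top]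
    simp only [enorm_eq_nnnorm]
    rw [ENNReal.toReal_ofReal hp0.le, hAp_def]
  -- interpolation step
  have hinterp : eLpNorm u (ENNReal.ofReal p) μ ≤ N 1 ^ θ * N k ^ (1 - θ) := by
    rcases eq_or_lt_of_le hθ0 with hθz | hθpos
    · -- θ = 0 : then p = 2K and the two sides agree
      have hpnum : 2 * K / p - 1 = 0 := by
        have := hθz.symm
        rw [hθ_def, div_eq_zero_iff] at this
        rcases this with h | h
        · exact h
        · exact absurd h hK1ne
      have hp2K : p = 2 * K := by
        have : 2 * K / p = 1 := by linarith
        field_simp at this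
        linarith
      have : ENNReal.ofReal p = 2 * (k : ℝ≥0∞) := by
        rw [hp2K]
        rw [show (2 : ℝ) * K = ((2 * k : ℕ) : ℝ) by push_cast [hK_def]; ring,
          ENNReal.ofReal_natCast]
        push_cast
        ring
      rw [this, ← hθz]
      simp [hN_def]
    · -- 0 < θ : Hölder interpolation
      have h1θ : 0 < 1 - θ := by linarith
      have hθne : θ ≠ 0 := hθpos.ne'
      have h1θne : (1 : ℝ) - θ ≠ 0 := h1θ.ne'
      have hpθval : p * θ = (2 * K - p) / (K - 1) := by
        rw [hθ_def]
        field_simp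
      have hpθ2 : p * θ < 2 := by
        rw [hpθval, div_lt_iff₀ (by linarith)]
        linarith
      have hpθ0 : 0 < p * θ := mul_pos hp0 hθpos
      set r : ℝ := 2 / (p * θ) with hr_def
      set s : ℝ := 2 * K / (p * (1 - θ)) with hs_def
      have hconj : Real.HolderConjugate r s := by
        rw [Real.holderConjugate_iff]
        constructor
        · rw [hr_def]
          exact (one_lt_div hpθ0).mpr hpθ2
        · rw [hr_def, hs_def, inv_div, inv_div,
            show p * θ / 2 + p * (1 - θ) / (2 * K) = p / 2 * (θ + (1 - θ) / K) by
              field_simp,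
            hrel]
          field_simp
      have hg : Measurable fun x => (‖u x‖₊ : ℝ≥0∞) := hu.nnnorm.coe_nnreal_ennreal
      have hholder : Ap ≤ A2 ^ (1 / r) * Ak ^ (1 / s) := by
        have H := ENNReal.lintegral_mul_le_Lp_mul_Lq μ hconj
          ((hg.aemeasurable).pow_const (p * θ)) ((hg.aemeasurable).pow_const (p * (1 - θ)))
        have e0 : Ap = ∫⁻ x,
            ((fun y => (‖u y‖₊ : ℝ≥0∞) ^ (p * θ)) * fun y => (‖u y‖₊ : ℝ≥0∞) ^ (p * (1 - θ))) x
              ∂μ := by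
          rw [hAp_def]
          apply lintegral_congr
          intro x
          simp only [Pi.mul_apply]
          rw [← ENNReal.rpow_add_of_nonneg _ _ hpθ0.le (mul_pos hp0 h1θ).le]
          congr 1
          ring
        have e1 : (∫⁻ x, ((‖u x‖₊ : ℝ≥0∞) ^ (p * θ)) ^ r ∂μ) = A2 := by
          rw [hA2_def]
          apply lintegral_congr
          intro x
          rw [← ENNReal.rpow_mul]
          congr 1
          rw [hr_def]
          field_simp
        have e2 : (∫⁻ x, ((‖u x‖₊ : ℝ≥0∞) ^ (p * (1 - θ))) ^ s ∂μ) = Ak := by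
          rw [hAk_def]
          apply lintegral_congr
          intro x
          rw [← ENNReal.rpow_mul]
          congr 1
          rw [hs_def]
          field_simp
        rw [e0]
        calc _ ≤ (∫⁻ x, ((‖u x‖₊ : ℝ≥0∞) ^ (p * θ)) ^ r ∂μ) ^ (1 / r) *
              (∫⁻ x, ((‖u x‖₊ : ℝ≥0∞) ^ (p * (1 - θ))) ^ s ∂μ) ^ (1 / s) := H
          _ = A2 ^ (1 / r) * Ak ^ (1 / s) := by rw [e1, e2]
      rw [hNp, hN1', hNk]
      calc Ap ^ (1 / p) ≤ (A2 ^ (1 / r) * Ak ^ (1 / s)) ^ (1 / p) :=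
            ENNReal.rpow_le_rpow hholder (by positivity)
        _ = (A2 ^ ((1 : ℝ) / 2)) ^ θ * (Ak ^ (1 / (2 * K))) ^ (1 - θ) := by
            rw [ENNReal.mul_rpow_of_nonneg _ _ (by positivity), ← ENNReal.rpow_mul,
              ← ENNReal.rpow_mul, ← ENNReal.rpow_mul, ← ENNReal.rpow_mul]
            congr 1
            · congr 1
              rw [hr_def]
              field_simp
            · congr 1
              rw [hs_def]
              field_simp
  -- bound N k using the iteration
  set D : ℝ≥0∞ := ENNReal.ofReal (c₀ ^ (k - 1) * (k.factorial : ℝ) * B ^ (k - 1)) with hD_def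
  have hNkb : N k ≤ (D * N 1) ^ (1 / K) := by
    have h := hN k (by omega)
    have e : N k = (N k ^ k) ^ (1 / K) := by
      rw [← ENNReal.rpow_natCast (N k) k, ← ENNReal.rpow_mul, ← hK_def, mul_one_div,
        div_self hKne, ENNReal.rpow_one]
    rw [e]
    exact ENNReal.rpow_le_rpow h (by positivity)
  set e₁ : ℝ := (1 - θ) / K with he₁_def
  have he₁0 : 0 ≤ e₁ := div_nonneg (by linarith) (by linarith)
  have hkK : ((k - 1 : ℕ) : ℝ) = K - 1 := by
    have h1k : 1 ≤ k := by omega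
    push_cast [h1k]
    ring
  have he₁K : e₁ * K = 1 - θ := by
    rw [he₁_def]; exact div_mul_cancel₀ _ hKne
  have hexp : ((k - 1 : ℕ) : ℝ) * e₁ = 1 - 2 / p := by
    rw [hkK]
    linear_combination he₁K - hrel
  have hfact1 : (1 : ℝ≥0∞) ≤ (k.factorial : ℝ≥0∞) := by
    exact_mod_cast Nat.one_le_iff_ne_zero.mpr k.factorial_ne_zero
  have hDe : D ^ e₁ ≤ ENNReal.ofReal (max 1 c₀) * (k.factorial : ℝ≥0∞) ^ ((1 : ℝ) / K) *
      ENNReal.ofReal B ^ (1 - 2 / p) := by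
    have hD' : D = ENNReal.ofReal c₀ ^ ((k - 1 : ℕ) : ℝ) * (k.factorial : ℝ≥0∞) *
        ENNReal.ofReal B ^ ((k - 1 : ℕ) : ℝ) := by
      rw [hD_def, ENNReal.ofReal_mul (by positivity), ENNReal.ofReal_mul (by positivity),
        ENNReal.ofReal_pow hc₀.le, ENNReal.ofReal_pow hB, ENNReal.ofReal_natCast,
        ENNReal.rpow_natCast, ENNReal.rpow_natCast]
    rw [hD', ENNReal.mul_rpow_of_nonneg _ _ he₁0, ENNReal.mul_rpow_of_nonneg _ _ he₁0,
      ← ENNReal.rpow_mul, ← ENNReal.rpow_mul, hexp]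
    have hc : ENNReal.ofReal c₀ ^ ((1 : ℝ) - 2 / p) ≤ ENNReal.ofReal (max 1 c₀) := by
      rcases le_total c₀ 1 with h | h
      · calc ENNReal.ofReal c₀ ^ ((1 : ℝ) - 2 / p) ≤ (1 : ℝ≥0∞) ^ ((1 : ℝ) - 2 / p) :=
              ENNReal.rpow_le_rpow (by simpa using ENNReal.ofReal_le_one.mpr h) (by linarith)
          _ = 1 := ENNReal.one_rpow _
          _ ≤ ENNReal.ofReal (max 1 c₀) := by
              rw [show (1 : ℝ≥0∞) = ENNReal.ofReal 1 by simp]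
              exact ENNReal.ofReal_le_ofReal (le_max_left _ _)
      · calc ENNReal.ofReal c₀ ^ ((1 : ℝ) - 2 / p) ≤ ENNReal.ofReal c₀ ^ (1 : ℝ) :=
              ENNReal.rpow_le_rpow_of_exponent_le (by simpa using ENNReal.one_le_ofReal.mpr h)
                (by linarith)
          _ = ENNReal.ofReal c₀ := ENNReal.rpow_one _
          _ ≤ ENNReal.ofReal (max 1 c₀) := ENNReal.ofReal_le_ofReal (le_max_right _ _)
    have hf : (k.factorial : ℝ≥0∞) ^ e₁ ≤ (k.factorial : ℝ≥0∞) ^ ((1 : ℝ) / K) := by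
      apply ENNReal.rpow_le_rpow_of_exponent_le hfact1
      rw [he₁_def]
      gcongr <;> linarith
    gcongr
  -- conversion of the constant
  have hconst : ENNReal.ofReal (max 1 c₀ * (k.factorial : ℝ) ^ ((1 : ℝ) / K)) =
      ENNReal.ofReal (max 1 c₀) * (k.factorial : ℝ≥0∞) ^ ((1 : ℝ) / K) := by
    rw [ENNReal.ofReal_mul (by positivity)]
    congr 1
    rw [← ENNReal.ofReal_rpow_of_pos (by exact_mod_cast k.factorial_pos), ENNReal.ofReal_natCast]
  -- final assembly
  calc eLpNorm u (ENNReal.ofReal p) μ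
      ≤ N 1 ^ θ * N k ^ (1 - θ) := hinterp
    _ ≤ N 1 ^ θ * ((D * N 1) ^ (1 / K)) ^ (1 - θ) :=
        mul_le_mul_right (ENNReal.rpow_le_rpow hNkb (by linarith)) _
    _ = D ^ e₁ * N 1 ^ ((2 : ℝ) / p) := by
        rw [← ENNReal.rpow_mul,
          ENNReal.mul_rpow_of_nonneg _ _ (mul_nonneg (by positivity) (by linarith : (0:ℝ) ≤ 1 - θ)),
          show 1 / K * (1 - θ) = e₁ by rw [he₁_def]; ring,
          mul_left_comm, ← ENNReal.rpow_add_of_nonneg _ _ hθ0 he₁0, hrel]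
    _ ≤ (ENNReal.ofReal (max 1 c₀) * (k.factorial : ℝ≥0∞) ^ ((1 : ℝ) / K) *
          ENNReal.ofReal B ^ (1 - 2 / p)) * N 1 ^ ((2 : ℝ) / p) := mul_le_mul_left hDe _
    _ = ENNReal.ofReal (max 1 c₀ * (k.factorial : ℝ) ^ ((1 : ℝ) / K)) *
          eLpNorm u 2 μ ^ ((2 : ℝ) / p) * ENNReal.ofReal B ^ (1 - 2 / p) := by
        rw [hconst, hN1]
        ring
end
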